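/- Let ν_l be the Student's t-density ν_l(x) = c_μ(1+x²)^{-(μ+1)/2} with CDF F and inverse F^{-1}: (0,1) → ℝ. Then F^{-1}(u) ~ -(c_μ/μ)^{1/μ} u^{-1/μ} as u → 0⁺, and F^{-1}(u) ~ (c_μ/μ)^{1/μ} (1-u)^{-1/μ} as u → 1⁻. -/

import Mathlib

open MeasureTheory Real Set Filter

lemma aux_lint {s : ℝ} (hs : 1/2 < s) :
    ∫⁻ x : ℝ, ENNReal.ofReal ((1 + x^2) ^ (-s)) =
      ENNReal.ofReal (Real.sqrt π * Real.Gamma (s - 1/2) / Real.Gamma s) := by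
  have hs0 : 0 < s := by linarith
  have hGs : 0 < Real.Gamma s := Real.Gamma_pos_of_pos hs0
  -- integrability of the gamma-type integrand
  have hint : ∀ b : ℝ, 0 < b → ∀ c : ℝ, 0 < c →
      IntegrableOn (fun t : ℝ => t ^ (c - 1) * Real.exp (-(b * t))) (Ioi 0) := by
    intro b hb c hc
    have h := integrableOn_rpow_mul_exp_neg_mul_rpow (p := 1) (s := c - 1) (b := b)
      (by linarith) one_pos hb
    refine h.congr_fun (fun t ht => ?_) measurableSet_Ioi
    beta_reduce
    rw [Real.rpow_one, neg_mul]
  have key : ∀ x : ℝ, (∫⁻ t in Ioi 0,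
      ENNReal.ofReal (t ^ (s-1) * Real.exp (-((1+x^2) * t))))
      = ENNReal.ofReal (Real.Gamma s * (1 + x^2) ^ (-s)) := by
    intro x
    have hx : (0:ℝ) < 1 + x^2 := by positivity
    rw [← ofReal_integral_eq_lintegral_ofReal (hint _ hx _ hs0)
      ((ae_restrict_iff' measurableSet_Ioi).mpr (ae_of_all _ fun t ht => by
        have : (0:ℝ) < t := ht; positivity))]
    rw [integral_rpow_mul_exp_neg_mul_Ioi hs0 hx]
    rw [one_div, Real.inv_rpow hx.le, ← Real.rpow_neg hx.le, mul_comm]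
  have hmeas : AEMeasurable (Function.uncurry fun (x t : ℝ) =>
      ENNReal.ofReal (t ^ (s-1) * Real.exp (-((1+x^2) * t))))
      (volume.prod (volume.restrict (Ioi 0))) := by
    apply Measurable.aemeasurable
    apply Measurable.ennreal_ofReal
    fun_prop
  have swap := lintegral_lintegral_swap hmeas
  have inner : ∀ t ∈ Ioi (0:ℝ),
      (∫⁻ x : ℝ, ENNReal.ofReal (t ^ (s-1) * Real.exp (-((1+x^2) * t))))
      = ENNReal.ofReal ((t ^ (s-1) * Real.exp (-t)) * Real.sqrt (π / t)) := by
    intro t ht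
    have ht' : (0:ℝ) < t := ht
    have h1 : ∀ x : ℝ, t ^ (s-1) * Real.exp (-((1+x^2) * t))
        = (t ^ (s-1) * Real.exp (-t)) * Real.exp (-t * x^2) := by
      intro x
      have : -((1+x^2)*t) = -t + -t * x^2 := by ring
      rw [this, Real.exp_add]; ring
    simp_rw [h1]
    rw [← ofReal_integral_eq_lintegral_ofReal
      ((integrable_exp_neg_mul_sq ht').const_mul _)
      (ae_of_all _ fun x => by positivity), integral_const_mul, integral_gaussian]
  have outer : (∫⁻ t in Ioi 0,
      ENNReal.ofReal ((t ^ (s-1) * Real.exp (-t)) * Real.sqrt (π / t)))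
      = ENNReal.ofReal (Real.sqrt π * Real.Gamma (s - 1/2)) := by
    have hcong : ∀ t ∈ Ioi (0:ℝ), ENNReal.ofReal ((t ^ (s-1) * Real.exp (-t)) * Real.sqrt (π / t))
        = ENNReal.ofReal (Real.sqrt π * (t ^ ((s - 1/2) - 1) * Real.exp (-(1 * t)))) := by
      intro t ht
      have ht' : (0:ℝ) < t := ht
      congr 1
      have h2 : Real.sqrt (π / t) = Real.sqrt π * t ^ (-(1/2) : ℝ) := by
        rw [Real.sqrt_div (le_of_lt Real.pi_pos), div_eq_mul_inv, Real.sqrt_eq_rpow t,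
          ← Real.rpow_neg ht'.le]
      have h3 : t ^ ((s - 1/2) - 1) = t ^ (s-1) * t ^ (-(1/2):ℝ) := by
        rw [← Real.rpow_add ht']; congr 1; ring
      rw [h2, h3, one_mul]; ring
    rw [setLIntegral_congr_fun measurableSet_Ioi hcong,
      ← ofReal_integral_eq_lintegral_ofReal ((hint 1 one_pos (s - 1/2) (by linarith)).const_mul _)
        ((ae_restrict_iff' measurableSet_Ioi).mpr (ae_of_all _ fun t ht => by
          have : (0:ℝ) < t := ht; positivity)),
      integral_const_mul, integral_rpow_mul_exp_neg_mul_Ioi (by linarith : (0:ℝ) < s - 1/2) one_pos]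
    norm_num
  have main : (∫⁻ x : ℝ, ENNReal.ofReal (Real.Gamma s * (1+x^2) ^ (-s)))
      = ENNReal.ofReal (Real.sqrt π * Real.Gamma (s - 1/2)) := by
    rw [lintegral_congr fun x => (key x).symm, swap,
      setLIntegral_congr_fun measurableSet_Ioi inner, outer]
  have hpull : (∫⁻ x : ℝ, ENNReal.ofReal (Real.Gamma s * (1+x^2) ^ (-s)))
      = ENNReal.ofReal (Real.Gamma s) * ∫⁻ x : ℝ, ENNReal.ofReal ((1+x^2) ^ (-s)) := by
    rw [← lintegral_const_mul' _ _ ENNReal.ofReal_ne_top]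
    congr 1; funext x
    rw [ENNReal.ofReal_mul hGs.le]
  have hmain2 : ENNReal.ofReal (Real.Gamma s) * (∫⁻ x : ℝ, ENNReal.ofReal ((1+x^2) ^ (-s)))
      = ENNReal.ofReal (Real.sqrt π * Real.Gamma (s - 1/2)) := by rw [← hpull]; exact main
  rw [ENNReal.ofReal_div_of_pos hGs, ← hmain2, mul_comm, mul_div_assoc,
    ENNReal.div_self (ENNReal.ofReal_pos.mpr hGs).ne' ENNReal.ofReal_ne_top, mul_one]

lemma aux_integrable {s : ℝ} (hs : 1/2 < s) :
    Integrable (fun x : ℝ => (1 + x^2) ^ (-s)) := by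
  have hm : Measurable fun x : ℝ => (1 + x^2) ^ (-s) := by fun_prop
  refine ⟨hm.aestronglyMeasurable, ?_⟩
  rw [hasFiniteIntegral_iff_ofReal (ae_of_all _ fun x => by positivity)]
  rw [aux_lint hs]
  exact ENNReal.ofReal_lt_top

lemma aux_integral {s : ℝ} (hs : 1/2 < s) :
    ∫ x : ℝ, (1 + x^2) ^ (-s) = Real.sqrt π * Real.Gamma (s - 1/2) / Real.Gamma s := by
  have h := ofReal_integral_eq_lintegral_ofReal (aux_integrable hs)
    (ae_of_all _ fun x => by positivity)
  rw [aux_lint hs] at h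
  have h1 : 0 ≤ ∫ x : ℝ, (1 + x^2) ^ (-s) :=
    integral_nonneg fun x => by positivity
  have h2 : 0 ≤ Real.sqrt π * Real.Gamma (s - 1/2) / Real.Gamma s := by
    have := Real.Gamma_pos_of_pos (by linarith : 0 < s - 1/2)
    have := Real.Gamma_pos_of_pos (by linarith : 0 < s)
    positivity
  exact (ENNReal.ofReal_eq_ofReal_iff h1 h2).mp h

lemma aux_comp_neg {f : ℝ → ℝ} {c : ℝ} (hf : IntegrableOn f (Ioi c)) :
    IntegrableOn (fun t => f (-t)) (Iic (-c)) := by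
  have A : MeasurableEmbedding fun x : ℝ => -x :=
    (Homeomorph.neg ℝ).isClosedEmbedding.measurableEmbedding
  have h := (A.integrableOn_map_iff (f := f) (μ := volume) (s := Ioi c))
  rw [Measure.map_neg_eq_self] at h
  have h2 := h.mp hf
  rw [integrableOn_Iic_iff_integrableOn_Iio]
  simpa [neg_preimage, neg_Ioi, Function.comp_def] using h2

lemma aux_tail {μ cμ : ℝ} (hμ : 0 < μ) (hcμ : 0 < cμ) {F : ℝ → ℝ}
    (hF : ∀ x, F x = ∫ t in Iic x, cμ * (1 + t^2) ^ (-(μ+1)/2)) :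
    Tendsto (fun x => F x * (μ / cμ) * (-x) ^ μ) atBot (nhds 1) := by
  have hs : 1/2 < (μ+1)/2 := by linarith
  have hνint : Integrable (fun t : ℝ => cμ * (1 + t^2) ^ (-(μ+1)/2)) := by
    simp only [neg_div]
    exact (aux_integrable hs).const_mul cμ
  have hsq : ∀ t : ℝ, t < 0 → ((t^2 : ℝ)) ^ (-(μ+1)/2) = (-t) ^ (-(μ+1)) := by
    intro t ht
    have h : (t^2 : ℝ) = (-t) ^ (2:ℕ) := by ring
    rw [h, ← Real.rpow_natCast (-t) 2, ← Real.rpow_mul (by linarith : (0:ℝ) ≤ -t)]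
    congr 1
    push_cast; ring
  have hKint : ∀ x : ℝ, x < 0 → IntegrableOn (fun t : ℝ => (-t) ^ (-(μ+1))) (Iic x) := by
    intro x hx
    have := aux_comp_neg (f := fun u : ℝ => u ^ (-(μ+1)))
      (integrableOn_Ioi_rpow_of_lt (by linarith) (by linarith : (0:ℝ) < -x))
    simpa using this
  have hK : ∀ x : ℝ, x < 0 → (∫ t in Iic x, (-t) ^ (-(μ+1))) = (-x) ^ (-μ) / μ := by
    intro x hx
    have h1 : (∫ t in Iic x, (-t) ^ (-(μ+1))) = ∫ t in Ioi (-x), t ^ (-(μ+1)) :=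
      integral_comp_neg_Iic x (fun u : ℝ => u ^ (-(μ+1)))
    rw [h1, integral_Ioi_rpow_of_lt (by linarith) (by linarith : (0:ℝ) < -x),
      show -(μ+1) + 1 = -μ by ring, neg_div_neg_eq]
  -- bounds
  have hbound : ∀ x : ℝ, x ≤ -1 →
      (1 + 1/x^2) ^ (-(μ+1)/2) ≤ F x * (μ/cμ) * (-x) ^ μ ∧
      F x * (μ/cμ) * (-x) ^ μ ≤ 1 := by
    intro x hx
    have hx0 : x < 0 := by linarith
    have hxpos : (0:ℝ) < -x := by linarith
    have hx2 : (0:ℝ) < x^2 := by nlinarith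
    have hpow : (-x) ^ (-μ) * (-x) ^ μ = 1 := by
      rw [← Real.rpow_add hxpos, neg_add_cancel, Real.rpow_zero]
    have hA : (0:ℝ) < (μ/cμ) * (-x) ^ μ :=
      mul_pos (div_pos hμ hcμ) (Real.rpow_pos_of_pos hxpos μ)
    have hKA : (cμ * ((-x) ^ (-μ) / μ)) * ((μ/cμ) * (-x) ^ μ) = 1 := by
      have h7 : (cμ * ((-x) ^ (-μ) / μ)) * ((μ/cμ) * (-x) ^ μ)
          = ((-x) ^ (-μ) * (-x) ^ μ) * ((cμ * cμ⁻¹) * (μ * μ⁻¹)) := by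
        field_simp
      rw [h7, hpow, mul_inv_cancel₀ hcμ.ne', mul_inv_cancel₀ hμ.ne']
      norm_num
    -- upper bound on the integral
    have hup : F x ≤ cμ * ((-x) ^ (-μ) / μ) := by
      rw [hF x, ← hK x hx0, ← integral_const_mul]
      refine setIntegral_mono_on hνint.integrableOn
        ((hKint x hx0).const_mul cμ) measurableSet_Iic (fun t ht => ?_)
      have ht0 : t < 0 := lt_of_le_of_lt ht hx0
      have h2 : (1 + t^2) ^ (-(μ+1)/2) ≤ (t^2 : ℝ) ^ (-(μ+1)/2) :=
        Real.rpow_le_rpow_of_nonpos (by nlinarith) (by linarith) (by linarith)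
      rw [hsq t ht0] at h2
      exact mul_le_mul_of_nonneg_left h2 hcμ.le
    -- lower bound on the integral
    have hlo : cμ * ((1 + 1/x^2) ^ (-(μ+1)/2) * ((-x) ^ (-μ) / μ)) ≤ F x := by
      rw [hF x, ← hK x hx0]
      rw [show cμ * ((1 + 1/x^2) ^ (-(μ+1)/2) * (∫ t in Iic x, (-t) ^ (-(μ+1))))
        = ∫ t in Iic x, cμ * ((1 + 1/x^2) ^ (-(μ+1)/2) * (-t) ^ (-(μ+1))) by
          rw [integral_const_mul, integral_const_mul]]
      refine setIntegral_mono_on (((hKint x hx0).const_mul _).const_mul cμ)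
        hνint.integrableOn measurableSet_Iic (fun t ht => ?_)
      have ht' : t ≤ x := ht
      have ht0 : t < 0 := lt_of_le_of_lt ht' hx0
      have ht2 : x^2 ≤ t^2 := by
        nlinarith [mul_nonneg (by linarith : (0:ℝ) ≤ x - t) (by linarith : (0:ℝ) ≤ -t - x)]
      have hmul : 1 + t^2 ≤ t^2 * (1 + 1/x^2) := by
        have h3 : (1:ℝ) ≤ t^2 / x^2 := (one_le_div hx2).mpr ht2
        have h4 : t^2 * (1 + 1/x^2) = t^2 + t^2/x^2 := by field_simp
        linarith
      have ht2pos : (0:ℝ) < t^2 := by nlinarith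
      have h5 : (t^2 * (1 + 1/x^2)) ^ (-(μ+1)/2) ≤ (1 + t^2) ^ (-(μ+1)/2) :=
        Real.rpow_le_rpow_of_nonpos (by positivity) hmul (by linarith)
      rw [Real.mul_rpow ht2pos.le (by positivity), hsq t ht0] at h5
      exact mul_le_mul_of_nonneg_left (by rw [mul_comm]; exact h5) hcμ.le
    constructor
    · have h9 := mul_le_mul_of_nonneg_right hlo hA.le
      have h8 : (cμ * ((1 + 1/x^2) ^ (-(μ+1)/2) * ((-x) ^ (-μ) / μ))) * ((μ/cμ) * (-x) ^ μ)
          = (1 + 1/x^2) ^ (-(μ+1)/2) *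
            ((cμ * ((-x) ^ (-μ) / μ)) * ((μ/cμ) * (-x) ^ μ)) := by ring
      rw [h8, hKA, mul_one] at h9
      calc (1 + 1/x^2) ^ (-(μ+1)/2) ≤ F x * ((μ/cμ) * (-x) ^ μ) := h9
        _ = F x * (μ/cμ) * (-x) ^ μ := by ring
    · have h10 := mul_le_mul_of_nonneg_right hup hA.le
      rw [hKA] at h10
      calc F x * (μ/cμ) * (-x) ^ μ = F x * ((μ/cμ) * (-x) ^ μ) := by ring
        _ ≤ 1 := h10
  -- squeeze
  have hlowlim : Tendsto (fun x : ℝ => (1 + 1/x^2) ^ (-(μ+1)/2)) atBot (nhds 1) := by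
    have h1 : Tendsto (fun x : ℝ => 1 + 1/x^2) atBot (nhds 1) := by
      have h2 : Tendsto (fun x : ℝ => 1/x^2) atBot (nhds 0) := by
        have h3 : Tendsto (fun x : ℝ => x^2) atBot atTop := by
          have hneg : Tendsto (fun x : ℝ => -x) atBot atTop := tendsto_neg_atBot_atTop
          have := (tendsto_pow_atTop (two_ne_zero)).comp hneg
          simpa [Function.comp_def, neg_sq] using this
        simpa [one_div, Function.comp_def] using tendsto_inv_atTop_zero.comp h3
      simpa using tendsto_const_nhds.add h2
    have := h1.rpow_const (p := -(μ+1)/2) (Or.inl one_ne_zero)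
    simpa using this
  refine tendsto_of_tendsto_of_tendsto_of_le_of_le' hlowlim tendsto_const_nhds ?_ ?_
  · filter_upwards [eventually_le_atBot (-1:ℝ)] with x hx using (hbound x hx).1
  · filter_upwards [eventually_le_atBot (-1:ℝ)] with x hx using (hbound x hx).2

lemma aux_ratio {μ cμ : ℝ} (hμ : 0 < μ) (hcμ : 0 < cμ) {F : ℝ → ℝ}
    (hF : ∀ x, F x = ∫ t in Iic x, cμ * (1 + t^2) ^ (-(μ+1)/2))
    (hFpos : ∀ x, 0 < F x) :
    Tendsto (fun x => x / (-(cμ/μ) ^ (1/μ) * (F x) ^ (-1/μ))) atBot (nhds 1) := by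
  have htail := aux_tail hμ hcμ hF
  have hq : (0:ℝ) < cμ/μ := div_pos hcμ hμ
  have heq : ∀ᶠ x in atBot, (F x * (μ/cμ) * (-x) ^ μ) ^ (1/μ)
      = x / (-(cμ/μ) ^ (1/μ) * (F x) ^ (-1/μ)) := by
    filter_upwards [eventually_lt_atBot (0:ℝ)] with x hx0
    have hxpos : (0:ℝ) < -x := by linarith
    set r := F x * (μ/cμ) * (-x) ^ μ with hr
    have hrpos : 0 < r :=
      mul_pos (mul_pos (hFpos x) (div_pos hμ hcμ)) (Real.rpow_pos_of_pos hxpos μ)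
    -- express F x via r
    have hFx : F x = r * ((cμ/μ) * (-x) ^ (-μ)) := by
      have h1 : r * ((cμ/μ) * (-x) ^ (-μ))
          = F x * ((μ/cμ) * (cμ/μ)) * ((-x) ^ μ * (-x) ^ (-μ)) := by ring
      rw [h1, ← Real.rpow_add hxpos, add_neg_cancel, Real.rpow_zero, mul_one,
        div_mul_div_comm, mul_comm μ cμ, div_self (by positivity), mul_one]
    have hxx : ((-x) ^ (-μ)) ^ (-1/μ) = -x := by
      rw [← Real.rpow_mul hxpos.le, show -μ * (-1/μ) = 1 by field_simp, Real.rpow_one]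
    have hkey : (F x) ^ (-1/μ) = r ^ (-1/μ) * ((cμ/μ) ^ (-1/μ) * (-x)) := by
      rw [hFx, Real.mul_rpow hrpos.le (by positivity),
        Real.mul_rpow hq.le (Real.rpow_pos_of_pos hxpos _).le, hxx]
    have hcc : (cμ/μ) ^ (1/μ) * (cμ/μ) ^ (-1/μ) = 1 := by
      rw [← Real.rpow_add hq, show 1/μ + -1/μ = 0 by ring, Real.rpow_zero]
    have hden : -(cμ/μ) ^ (1/μ) * (F x) ^ (-1/μ) = r ^ (-1/μ) * x := by
      rw [hkey, show -(cμ/μ) ^ (1/μ) * (r ^ (-1/μ) * ((cμ/μ) ^ (-1/μ) * (-x)))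
        = ((cμ/μ) ^ (1/μ) * (cμ/μ) ^ (-1/μ)) * (r ^ (-1/μ) * x) by ring, hcc, one_mul]
    rw [hden, mul_comm, ← div_div, div_self hx0.ne,
      show -1/μ = -(1/μ) by ring, Real.rpow_neg hrpos.le]
    simp
  have h1 := htail.rpow_const (p := 1/μ) (Or.inr (by positivity))
  rw [Real.one_rpow] at h1
  exact h1.congr' heq

theorem stmt_3 (μ cμ : ℝ) (hμ : 0 < μ)
    (hc : cμ = Real.Gamma ((μ+1)/2) / (Real.Gamma (μ/2) * Real.sqrt Real.pi))
    (ν : ℝ → ℝ) (hν : ∀ x, ν x = cμ * (1 + x^2) ^ (-(μ+1)/2))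
    (F : ℝ → ℝ) (hF : ∀ x, F x = ∫ t in Set.Iic x, ν t)
    (Finv : ℝ → ℝ)
    (hFinv : ∀ u ∈ Set.Ioo (0:ℝ) 1, F (Finv u) = u)
    (hFinv' : ∀ x, Finv (F x) = x) :
    Tendsto (fun u => Finv u / (-(cμ / μ) ^ (1/μ) * u ^ (-1/μ)))
      (nhdsWithin 0 (Set.Ioi 0)) (nhds 1) ∧
    Tendsto (fun u => Finv u / ((cμ / μ) ^ (1/μ) * (1 - u) ^ (-1/μ)))
      (nhdsWithin 1 (Set.Iio 1)) (nhds 1) := by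
  have hs : 1/2 < (μ+1)/2 := by linarith
  have hg1 : (0:ℝ) < Real.Gamma ((μ+1)/2) := Real.Gamma_pos_of_pos (by linarith)
  have hg2 : (0:ℝ) < Real.Gamma (μ/2) := Real.Gamma_pos_of_pos (by linarith)
  have hsp : (0:ℝ) < Real.sqrt Real.pi := Real.sqrt_pos.mpr Real.pi_pos
  have hcμ : 0 < cμ := by rw [hc]; positivity
  have hνfun : ν = fun t : ℝ => cμ * (1 + t^2) ^ (-(μ+1)/2) := funext hν
  have hFeq : ∀ x, F x = ∫ t in Iic x, cμ * (1 + t^2) ^ (-(μ+1)/2) := fun x => by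
    rw [hF x, hνfun]
  have hνint : Integrable ν := by
    rw [hνfun]; simp only [neg_div]; exact (aux_integrable hs).const_mul cμ
  have hνpos : ∀ x, 0 < ν x := fun x => by rw [hν]; positivity
  have htot : ∫ x, ν x = 1 := by
    rw [hνfun]
    simp only [neg_div]
    rw [integral_const_mul, aux_integral hs, hc, show (μ+1)/2 - 1/2 = μ/2 by ring]
    field_simp
  have hIpos : ∀ (s : Set ℝ), MeasurableSet s → 0 < volume s → 0 < ∫ t in s, ν t := by
    intro s hms hvs
    rw [setIntegral_pos_iff_support_of_nonneg_ae
      (ae_of_all _ fun t => (hνpos t).le) hνint.integrableOn]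
    have hsupp : Function.support ν = univ := by
      ext t; simp [Function.mem_support, (hνpos t).ne']
    rw [hsupp, univ_inter]; exact hvs
  have hFpos : ∀ x, 0 < F x := fun x => by
    rw [hF]
    exact hIpos _ measurableSet_Iic (by rw [Real.volume_Iic]; exact ENNReal.zero_lt_top)
  have hcompl : ∀ x, F x + ∫ t in Ioi x, ν t = 1 := fun x => by
    calc F x + ∫ t in Ioi x, ν t
        = (∫ t in Iic x, ν t) + ∫ t in (Iic x)ᶜ, ν t := by rw [hF, compl_Iic]
      _ = ∫ t, ν t := integral_add_compl measurableSet_Iic hνint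
      _ = 1 := htot
  have hFlt1 : ∀ x, F x < 1 := fun x => by
    have h := hcompl x
    have := hIpos (Ioi x) measurableSet_Ioi (by rw [Real.volume_Ioi]; exact ENNReal.zero_lt_top)
    linarith
  have hmono : StrictMono F := by
    intro a b hab
    have hsplit : F b = F a + ∫ t in Ioc a b, ν t := by
      rw [hF, hF, ← Iic_union_Ioc_eq_Iic hab.le,
        setIntegral_union (Iic_disjoint_Ioc le_rfl) measurableSet_Ioc
          hνint.integrableOn hνint.integrableOn]
    have := hIpos (Ioc a b) measurableSet_Ioc
      (by rw [Real.volume_Ioc]; exact ENNReal.ofReal_pos.mpr (by linarith))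
    linarith
  have hFinvBot : Tendsto Finv (nhdsWithin 0 (Ioi 0)) atBot := by
    rw [tendsto_atBot]
    intro M
    filter_upwards [Ioo_mem_nhdsGT_of_mem (⟨le_rfl, hFpos M⟩ : (0:ℝ) ∈ Ico 0 (F M))]
      with u hu
    have hu1 : u ∈ Ioo (0:ℝ) 1 := ⟨hu.1, hu.2.trans (hFlt1 M)⟩
    by_contra h
    push_neg at h
    have h2 : F M ≤ F (Finv u) := hmono.monotone h.le
    rw [hFinv u hu1] at h2
    exact absurd hu.2 (not_lt.mpr h2)
  have hratio := aux_ratio hμ hcμ hFeq hFpos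
  have part1 : Tendsto (fun u => Finv u / (-(cμ / μ) ^ (1/μ) * u ^ (-1/μ)))
      (nhdsWithin 0 (Set.Ioi 0)) (nhds 1) := by
    have hcomp := hratio.comp hFinvBot
    refine hcomp.congr' ?_
    filter_upwards [Ioo_mem_nhdsGT_of_mem (⟨le_rfl, one_pos⟩ : (0:ℝ) ∈ Ico 0 1)] with u hu
    simp only [Function.comp_apply]
    rw [hFinv u hu]
  have hFneg : ∀ x, F (-x) = 1 - F x := by
    intro x
    have hνsym : ∀ t : ℝ, ν (-t) = ν t := fun t => by rw [hν, hν, neg_sq]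
    have h1 : F (-x) = ∫ t in Ioi x, ν t := by
      rw [hF]
      have h2 : (∫ t in Iic (-x), ν t) = ∫ t in Iic (-x), ν (-t) := by
        simp_rw [hνsym]
      rw [h2, integral_comp_neg_Iic, neg_neg]
    have := hcompl x
    linarith
  have hFinvneg : ∀ u ∈ Ioo (0:ℝ) 1, Finv u = -Finv (1-u) := by
    intro u hu
    have hu' : 1 - u ∈ Ioo (0:ℝ) 1 := ⟨by linarith [hu.2], by linarith [hu.1]⟩
    have h1 : F (-(Finv (1-u))) = u := by rw [hFneg, hFinv _ hu']; ring
    calc Finv u = Finv (F (-(Finv (1-u)))) := by rw [h1]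
      _ = -(Finv (1-u)) := hFinv' _
  have hmap : Tendsto (fun u : ℝ => 1 - u) (nhdsWithin 1 (Iio 1)) (nhdsWithin 0 (Ioi 0)) := by
    rw [tendsto_nhdsWithin_iff]
    constructor
    · have h1 : Tendsto (fun u : ℝ => 1 - u) (nhdsWithin 1 (Iio 1)) (nhds (1 - 1)) :=
        ((continuous_const.sub continuous_id).tendsto 1).mono_left nhdsWithin_le_nhds
      simpa using h1
    · filter_upwards [self_mem_nhdsWithin] with u hu
      exact sub_pos.mpr (mem_Iio.mp hu)
  have part2 : Tendsto (fun u => Finv u / ((cμ / μ) ^ (1/μ) * (1 - u) ^ (-1/μ)))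
      (nhdsWithin 1 (Set.Iio 1)) (nhds 1) := by
    have hcomp := part1.comp hmap
    refine hcomp.congr' ?_
    filter_upwards [Ioo_mem_nhdsLT_of_mem (⟨one_pos, le_rfl⟩ : (1:ℝ) ∈ Ioc 0 1)] with u hu
    simp only [Function.comp_apply]
    have h1 : Finv (1 - u) = -Finv u := by rw [hFinvneg u hu]; ring
    rw [h1, show -Finv u / (-(cμ/μ) ^ (1/μ) * (1-u) ^ (-1/μ))
      = Finv u / ((cμ/μ) ^ (1/μ) * (1-u) ^ (-1/μ)) by rw [← neg_div_neg_eq]; ring_nf]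
  exact ⟨part1, part2⟩
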